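/- arXiv:2005.03340 — 3 statements merged into one kernel-verified Lean document; each statement's English description precedes it below -/
import Mathlib

section
/- Let b > 0, α ≥ 0, and consider the normalized SVI function with ρ = −1: N(l) = α + b(√(l²+1) − l), which is positive and strictly decreasing. Let G₂(l) = N''(l) − N'(l)²/(2N(l)), where N'(l) = b(l/√(l²+1) − 1) and N''(l) = b/(l²+1)^{3/2}. Then G₂ has exactly one zero l₁, which is negative; G₂(l) > 0 for all l > l₁ and G₂(l) < 0 for all l < l₁; and lim_{l→+∞} G₂(l) = 0 with G₂ positive near +∞, while lim_{l→−∞} G₂(l) = 0 with G₂ negative near −∞. -/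
noncomputable def sq1 (l : ℝ) : ℝ := Real.sqrt (l ^ 2 + 1)

lemma sq1_pos (l : ℝ) : 0 < sq1 l := Real.sqrt_pos.2 (by positivity)

lemma sq1_sq (l : ℝ) : sq1 l ^ 2 = l ^ 2 + 1 := Real.sq_sqrt (by positivity)

lemma lt_sq1 (l : ℝ) : l < sq1 l := by
  nlinarith [sq1_pos l, sq1_sq l, sq_nonneg (sq1 l - l)]

lemma neg_lt_sq1 (l : ℝ) : -l < sq1 l := by
  nlinarith [sq1_pos l, sq1_sq l, sq_nonneg (sq1 l + l)]

lemma one_le_sq1 (l : ℝ) : 1 ≤ sq1 l := by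
  nlinarith [sq1_pos l, sq1_sq l]

lemma rpow_32 (l : ℝ) : ((l : ℝ) ^ 2 + 1) ^ ((3 : ℝ) / 2) = (sq1 l) ^ 3 := by
  have h : (0:ℝ) ≤ l ^ 2 + 1 := by positivity
  rw [show ((3:ℝ)/2) = (1/2) * 3 by norm_num, Real.rpow_mul h,
    show ((3:ℝ)) = ((3:ℕ):ℝ) by norm_num, Real.rpow_natCast, sq1,
    Real.sqrt_eq_rpow]


noncomputable def Hf (b α l : ℝ) : ℝ :=
  2 * α + 2 * b * (sq1 l - l) - b * (sq1 l - l) ^ 2 * sq1 l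

lemma N_pos (b α : ℝ) (hb : 0 < b) (hα : 0 ≤ α) (l : ℝ) :
    0 < α + b * (sq1 l - l) := by
  nlinarith [lt_sq1 l]

lemma sq1_def (l : ℝ) : Real.sqrt (l ^ 2 + 1) = sq1 l := rfl

lemma G2_eq (b α : ℝ) (hb : 0 < b) (hα : 0 ≤ α) (l : ℝ) :
    b / (l ^ 2 + 1) ^ ((3 : ℝ) / 2)
      - (b * (l / Real.sqrt (l ^ 2 + 1) - 1)) ^ 2
        / (2 * (α + b * (Real.sqrt (l ^ 2 + 1) - l)))
    = b * Hf b α l / (2 * (sq1 l) ^ 3 * (α + b * (sq1 l - l))) := by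
  have h0 : sq1 l ≠ 0 := (sq1_pos l).ne'
  have hN0 : α + b * (sq1 l - l) ≠ 0 := (N_pos b α hb hα l).ne'
  have h2 := sq1_sq l
  rw [rpow_32, sq1_def]
  unfold Hf
  field_simp
  ring_nf


lemma hasDerivAt_sq1 (l : ℝ) : HasDerivAt sq1 (l / sq1 l) l := by
  have h1 : HasDerivAt (fun x : ℝ => x ^ 2 + 1) (2 * l) l := by
    simpa using ((hasDerivAt_pow 2 l).add_const 1)
  have h2 := h1.sqrt (by positivity)
  convert (show HasDerivAt sq1 _ l from h2) using 1
  unfold sq1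
  field_simp

lemma hasDerivAt_Hf (b α l : ℝ) :
    HasDerivAt (Hf b α) (-3 * b * l * (sq1 l - l) ^ 2 / sq1 l) l := by
  have hs := hasDerivAt_sq1 l
  have hu : HasDerivAt (fun x => sq1 x - x) (l / sq1 l - 1) l := hs.sub (hasDerivAt_id l)
  have h := (((hu.const_mul (2*b)).const_add (2*α)).sub (((hu.pow 2).const_mul b).mul hs))
  have h' : HasDerivAt (Hf b α) _ l := h
  convert h' using 1
  simp only [Pi.pow_apply]
  have h0 : sq1 l ≠ 0 := (sq1_pos l).ne'
  have h2 := sq1_sq l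
  field_simp
  ring_nf
  linear_combination (2*b*(l - sq1 l)) * h2

lemma Hf_continuous (b α : ℝ) : Continuous (Hf b α) := by
  have hc : Continuous sq1 := by
    unfold sq1; exact Real.continuous_sqrt.comp (by continuity)
  unfold Hf; continuity

lemma Hf_strictMonoOn (b α : ℝ) (hb : 0 < b) : StrictMonoOn (Hf b α) (Set.Iic 0) := by
  apply strictMonoOn_of_deriv_pos (convex_Iic 0) (Hf_continuous b α).continuousOn
  intro x hx
  rw [interior_Iic] at hx
  rw [(hasDerivAt_Hf b α x).deriv]
  have h1 : 0 < -3 * b * x := by nlinarith [hx.out]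
  have h2 : 0 < (sq1 x - x) ^ 2 := by
    have := lt_sq1 x; exact pow_pos (by linarith) 2
  exact div_pos (mul_pos h1 h2) (sq1_pos x)

lemma Hf_pos_of_nonneg (b α : ℝ) (hb : 0 < b) (hα : 0 ≤ α) (l : ℝ) (hl : 0 ≤ l) :
    0 < Hf b α l := by
  have h2 := sq1_sq l
  have hs := sq1_pos l
  have hls := lt_sq1 l
  have hus : sq1 l * (sq1 l - l) ≤ 1 := by nlinarith
  unfold Hf
  nlinarith [mul_pos hb (show 0 < sq1 l - l by linarith),
    mul_le_mul_of_nonneg_left hus (show 0 ≤ b * (sq1 l - l) by nlinarith)]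

lemma Hf_exists_zero (b α : ℝ) (hb : 0 < b) (hα : 0 ≤ α) :
    ∃ l₁, l₁ < 0 ∧ Hf b α l₁ = 0 := by
  set M : ℝ := 2 + α / b with hMdef
  have hM2 : (2:ℝ) ≤ M := le_add_of_nonneg_right (div_nonneg hα hb.le)
  have hαM : α = b * (M - 2) := by rw [hMdef]; field_simp; ring
  have hs2 : sq1 (-M) ^ 2 = M ^ 2 + 1 := by simpa using sq1_sq (-M)
  have hspos := sq1_pos (-M)
  have hsM : M < sq1 (-M) := by simpa using neg_lt_sq1 (-M)
  have hsM1 : sq1 (-M) ≤ M + 1 := by nlinarith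
  have hMneg : Hf b α (-M) < 0 := by
    unfold Hf
    have h1 : (2*M)^2 * M ≤ (sq1 (-M) - (-M))^2 * sq1 (-M) := by nlinarith
    nlinarith [h1, mul_pos hb (show (0:ℝ) < M by linarith)]
  have h0pos : 0 < Hf b α 0 := Hf_pos_of_nonneg b α hb hα 0 le_rfl
  have hmem : (0:ℝ) ∈ Set.Ioo (Hf b α (-M)) (Hf b α 0) := ⟨hMneg, h0pos⟩
  obtain ⟨l₁, hl₁, hval⟩ := intermediate_value_Ioo (show -M ≤ 0 by linarith)
    (Hf_continuous b α).continuousOn hmem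
  exact ⟨l₁, hl₁.2, hval⟩

lemma G2_le (b α : ℝ) (hb : 0 < b) (hα : 0 ≤ α) (l : ℝ) :
    b / (l ^ 2 + 1) ^ ((3 : ℝ) / 2)
      - (b * (l / Real.sqrt (l ^ 2 + 1) - 1)) ^ 2
        / (2 * (α + b * (Real.sqrt (l ^ 2 + 1) - l))) ≤ b / sq1 l := by
  rw [rpow_32, sq1_def]
  have hs := sq1_pos l
  have h1 := one_le_sq1 l
  have hN := N_pos b α hb hα l
  have t2 : 0 ≤ (b * (l / sq1 l - 1)) ^ 2 / (2 * (α + b * (sq1 l - l))) := by positivity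
  have t3 : b / sq1 l ^ 3 ≤ b / sq1 l := by
    apply div_le_div_of_nonneg_left hb.le hs
    nlinarith [mul_nonneg (mul_nonneg (by linarith : (0:ℝ) ≤ sq1 l - 1) hs.le) hs.le,
      mul_nonneg (by linarith : (0:ℝ) ≤ sq1 l - 1) hs.le]
  linarith

lemma G2_ge (b α : ℝ) (hb : 0 < b) (hα : 0 ≤ α) (l : ℝ) :
    -(b / sq1 l) ≤
    b / (l ^ 2 + 1) ^ ((3 : ℝ) / 2)
      - (b * (l / Real.sqrt (l ^ 2 + 1) - 1)) ^ 2
        / (2 * (α + b * (Real.sqrt (l ^ 2 + 1) - l))) := by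
  rw [rpow_32, sq1_def]
  have hs := sq1_pos l
  have h2 := sq1_sq l
  have hN := N_pos b α hb hα l
  have hu : 0 < sq1 l - l := by linarith [lt_sq1 l]
  have hu2 : sq1 l - l ≤ 2 * sq1 l := by linarith [neg_lt_sq1 l]
  have key : (b * (l / sq1 l - 1)) ^ 2 ≤ (b / sq1 l) * (2 * (α + b * (sq1 l - l))) := by
    rw [div_mul_eq_mul_div, le_div_iff₀ hs]
    have e : (b * (l / sq1 l - 1)) ^ 2 * sq1 l = b ^ 2 * (sq1 l - l) ^ 2 / sq1 l := by
      field_simp; ring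
    rw [e, div_le_iff₀ hs]
    nlinarith [mul_le_mul_of_nonneg_right
        (mul_le_mul_of_nonneg_left hu2 (mul_nonneg hb.le hu.le))
        (mul_nonneg hb.le (mul_pos hs hs).le),
      mul_nonneg (mul_nonneg hα hb.le) (mul_pos hs hs).le]
  have t2 : (b * (l / sq1 l - 1)) ^ 2 / (2 * (α + b * (sq1 l - l))) ≤ b / sq1 l := by
    rw [div_le_iff₀ (by linarith)]
    linarith [key]
  have t3 : 0 ≤ b / sq1 l ^ 3 := by positivity
  linarith

lemma sq1_tendsto_atTop : Filter.Tendsto sq1 Filter.atTop Filter.atTop :=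
  Filter.tendsto_atTop_mono (fun l => (lt_sq1 l).le) Filter.tendsto_id

lemma sq1_tendsto_atBot : Filter.Tendsto sq1 Filter.atBot Filter.atTop :=
  Filter.tendsto_atTop_mono (fun l => (neg_lt_sq1 l).le) Filter.tendsto_neg_atBot_atTop

/-- monotone case `ρ = −1`: for `N(l) = α + b(√(l²+1) − l)`
with `b > 0`, `α ≥ 0`, the function `G₂ = N'' − N'²/(2N)` has exactly one zero
`l₁ < 0`, is positive on `(l₁, ∞)` and negative on `(−∞, l₁)`, and tends to `0`
at both `+∞` (from above) and `−∞` (from below). -/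
theorem G2_single_zero_rho_minus_one
    (b α : ℝ) (hb : 0 < b) (hα : 0 ≤ α)
    (N N' N'' G₂ : ℝ → ℝ)
    (hN : ∀ l, N l = α + b * (Real.sqrt (l ^ 2 + 1) - l))
    (hN' : ∀ l, N' l = b * (l / Real.sqrt (l ^ 2 + 1) - 1))
    (hN'' : ∀ l, N'' l = b / (l ^ 2 + 1) ^ ((3 : ℝ) / 2))
    (hG₂ : ∀ l, G₂ l = N'' l - (N' l) ^ 2 / (2 * N l)) :
    (∀ l, 0 < N l) ∧ StrictAnti N ∧
    ∃ l₁ : ℝ, l₁ < 0 ∧ G₂ l₁ = 0 ∧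
      (∀ l, G₂ l = 0 ↔ l = l₁) ∧
      (∀ l, l₁ < l → 0 < G₂ l) ∧
      (∀ l, l < l₁ → G₂ l < 0) ∧
      Filter.Tendsto G₂ Filter.atTop (nhds 0) ∧
      Filter.Tendsto G₂ Filter.atBot (nhds 0) := by
  have hNpos : ∀ l, 0 < N l := fun l => by
    rw [hN l, sq1_def]; exact N_pos b α hb hα l
  have hanti : StrictAnti N := by
    intro x y hxy
    rw [hN x, hN y, sq1_def, sq1_def]
    nlinarith [sq1_sq x, sq1_sq y, lt_sq1 x, lt_sq1 y, neg_lt_sq1 x, neg_lt_sq1 y,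
      sq1_pos x, sq1_pos y,
      mul_pos (sub_pos.2 hxy) (show 0 < sq1 x + sq1 y - x - y by
        nlinarith [lt_sq1 x, lt_sq1 y])]
  have hG2eq : ∀ l, G₂ l = b * Hf b α l / (2 * sq1 l ^ 3 * (α + b * (sq1 l - l))) :=
    fun l => by rw [hG₂ l, hN'' l, hN' l, hN l]; exact G2_eq b α hb hα l
  obtain ⟨l₁, hl₁neg, hl₁zero⟩ := Hf_exists_zero b α hb hα
  have hHpos : ∀ l, l₁ < l → 0 < Hf b α l := by
    intro l hl
    rcases le_or_gt l 0 with h | h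
    · have := Hf_strictMonoOn b α hb (Set.mem_Iic.2 hl₁neg.le) (Set.mem_Iic.2 h) hl
      linarith [hl₁zero]
    · exact Hf_pos_of_nonneg b α hb hα l h.le
  have hHneg : ∀ l, l < l₁ → Hf b α l < 0 := by
    intro l hl
    have := Hf_strictMonoOn b α hb (Set.mem_Iic.2 (by linarith : l ≤ 0))
      (Set.mem_Iic.2 hl₁neg.le) hl
    linarith [hl₁zero]
  have hD : ∀ l, 0 < 2 * sq1 l ^ 3 * (α + b * (sq1 l - l)) := fun l => by
    have h1 := sq1_pos l; have h2 := N_pos b α hb hα l; positivity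
  have hGpos : ∀ l, l₁ < l → 0 < G₂ l := fun l hl => by
    rw [hG2eq l]; exact div_pos (mul_pos hb (hHpos l hl)) (hD l)
  have hGneg : ∀ l, l < l₁ → G₂ l < 0 := fun l hl => by
    rw [hG2eq l]; exact div_neg_of_neg_of_pos (mul_neg_of_pos_of_neg hb (hHneg l hl)) (hD l)
  have hGzero : G₂ l₁ = 0 := by rw [hG2eq l₁, hl₁zero]; simp
  have hbound_le : ∀ l, G₂ l ≤ b / sq1 l := fun l => by
    rw [hG₂ l, hN'' l, hN' l, hN l]; exact G2_le b α hb hα l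
  have hbound_ge : ∀ l, -(b / sq1 l) ≤ G₂ l := fun l => by
    rw [hG₂ l, hN'' l, hN' l, hN l]; exact G2_ge b α hb hα l
  have htop : Filter.Tendsto (fun l => b / sq1 l) Filter.atTop (nhds 0) :=
    Filter.Tendsto.div_atTop tendsto_const_nhds sq1_tendsto_atTop
  have hbot : Filter.Tendsto (fun l => b / sq1 l) Filter.atBot (nhds 0) :=
    Filter.Tendsto.div_atTop tendsto_const_nhds sq1_tendsto_atBot
  have htop' : Filter.Tendsto (fun l => -(b / sq1 l)) Filter.atTop (nhds 0) := by
    simpa using htop.neg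
  have hbot' : Filter.Tendsto (fun l => -(b / sq1 l)) Filter.atBot (nhds 0) := by
    simpa using hbot.neg
  refine ⟨hNpos, hanti, l₁, hl₁neg, hGzero, ?_, hGpos, hGneg, ?_, ?_⟩
  · intro l
    constructor
    · intro h
      by_contra hne
      rcases lt_or_gt_of_ne hne with h' | h'
      · exact absurd h (hGneg l h').ne
      · exact absurd h (hGpos l h').ne'
    · rintro rfl; exact hGzero
  · exact tendsto_of_tendsto_of_tendsto_of_le_of_le htop' htop hbound_ge hbound_le
  · exact tendsto_of_tendsto_of_tendsto_of_le_of_le hbot' hbot hbound_ge hbound_le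
end

section
/- Let 0 < b < 1 and consider the normalized SVI with ρ = −1, α = 0: N(l) = b(√(l²+1) − l). Define g₋(l) = (l − √(l²+1))²(√(l²+1)(1/2 − b/4) + bl/4) − (√(l²+1) − l) and L₋(l) = 2N(l)(1/N'(l) + 1/4) − l, where N'(l) = b(l/√(l²+1) − 1) < 0. Then: (i) s₋ := −(b+2)/(2√(3(1−b))) is the unique real solution of g₋(l) = 0; (ii) L₋(s₋) = −√(3(1−b)), and sup_{l∈ℝ} L₋(l) = −√(3(1−b)); (iii) the unique zero of G₂(l) = N''(l) − N'(l)²/(2N(l)) is l₁ = −1/√3, independently of b. -/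
lemma svi_pos_sq_eq {x y : ℝ} (hx : 0 ≤ x) (hy : 0 ≤ y) (h : x^2 = y^2) : x = y := by
  rw [← Real.sqrt_sq hx, h, Real.sqrt_sq hy]

lemma svi_facts (l : ℝ) : ∃ u : ℝ, Real.sqrt (l^2+1) = u + l ∧ 0 < u ∧ 0 < u + l ∧
    u^2 + 2*l*u = 1 := by
  have h0 : (0:ℝ) < l^2 + 1 := by positivity
  have hs0 : 0 < Real.sqrt (l^2+1) := Real.sqrt_pos.mpr h0
  have hs2 : (Real.sqrt (l^2+1))^2 = l^2+1 := Real.sq_sqrt h0.le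
  have hlt : l < Real.sqrt (l^2+1) := by nlinarith [hs0, hs2]
  exact ⟨Real.sqrt (l^2+1) - l, by ring, by linarith, by linarith, by linear_combination hs2⟩

lemma svi_uniq_root {l u u' : ℝ} (hu : 0 < u) (hu' : 0 < u')
    (h : u^2 + 2*l*u = 1) (h' : u'^2 + 2*l*u' = 1) : u = u' := by
  have h3 : (u - u') * (u + u' + 2*l) = 0 := by linear_combination h - h'
  rcases mul_eq_zero.mp h3 with h4 | h4
  · linarith
  · have : u * u' = -1 := by linear_combination u * h4 - h
    nlinarith [mul_pos hu hu']

lemma svi_gm_formula (b l u : ℝ) (gm : ℝ → ℝ)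
    (hgm : ∀ l, gm l = (l - Real.sqrt (l ^ 2 + 1)) ^ 2 *
        (Real.sqrt (l ^ 2 + 1) * (1 / 2 - b / 4) + b * l / 4) -
        (Real.sqrt (l ^ 2 + 1) - l))
    (hs : Real.sqrt (l^2+1) = u + l) (hul : u^2 + 2*l*u = 1) :
    gm l = u * ((1-b)*u^2 - 3) / 4 := by
  rw [hgm, hs]
  linear_combination (u/4) * hul

lemma svi_Lm_formula (b l u : ℝ) (hb : 0 < b) (N N' Lm : ℝ → ℝ)
    (hN : ∀ l, N l = b * (Real.sqrt (l ^ 2 + 1) - l))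
    (hN' : ∀ l, N' l = b * (l / Real.sqrt (l ^ 2 + 1) - 1))
    (hLm : ∀ l, Lm l = 2 * N l * (1 / N' l + 1 / 4) - l)
    (hs : Real.sqrt (l^2+1) = u + l) (hu : 0 < u) (hsl : 0 < u + l)
    (hul : u^2 + 2*l*u = 1) :
    Lm l = -((1-b)*u/2 + 3/(2*u)) := by
  rw [hLm, hN, hN', hs]
  have h1 : u + l - l = u := by ring
  have h2 : l / (u+l) - 1 = -u/(u+l) := by field_simp; ring
  rw [h1, h2]
  field_simp
  linear_combination (-12) * hul

lemma svi_G2_formula (b l u : ℝ) (hb : 0 < b) (N N' G₂ : ℝ → ℝ)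
    (hN : ∀ l, N l = b * (Real.sqrt (l ^ 2 + 1) - l))
    (hN' : ∀ l, N' l = b * (l / Real.sqrt (l ^ 2 + 1) - 1))
    (hG₂ : ∀ l, G₂ l = b / (l ^ 2 + 1) ^ ((3 : ℝ) / 2) - (N' l) ^ 2 / (2 * N l))
    (hs : Real.sqrt (l^2+1) = u + l) (hu : 0 < u) (hsl : 0 < u + l) :
    G₂ l = b * (2 - u*(u+l)) / (2*(u+l)^3) := by
  have hpow : (l^2+1 : ℝ) ^ ((3:ℝ)/2) = (u+l)^3 := by
    rw [show ((3:ℝ)/2) = (1/2)*3 by norm_num,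
        Real.rpow_mul (by positivity), ← Real.sqrt_eq_rpow, hs,
        show ((3:ℝ)) = ((3:ℕ):ℝ) by norm_num, Real.rpow_natCast]
  rw [hG₂, hN, hN', hs, hpow]
  have h1 : u + l - l = u := by ring
  have h2 : l / (u+l) - 1 = -u/(u+l) := by field_simp; ring
  rw [h1, h2]
  field_simp

/-- SVI decreasing to zero: `ρ = −1`, `α = 0`, `0 < b < 1`:
(i) `s₋ = −(b+2)/(2√(3(1−b)))` is the unique real solution of `g₋(l) = 0`;
(ii) `L₋(s₋) = −√(3(1−b))` and `sup_{l∈ℝ} L₋(l) = −√(3(1−b))`;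
(iii) the unique zero of `G₂` is `l₁ = −1/√3`, independently of `b`. -/
theorem svi_decreasing_to_zero
    (b : ℝ) (hb₀ : 0 < b) (hb₁ : b < 1)
    (N N' gm Lm G₂ : ℝ → ℝ)
    (hN : ∀ l, N l = b * (Real.sqrt (l ^ 2 + 1) - l))
    (hN' : ∀ l, N' l = b * (l / Real.sqrt (l ^ 2 + 1) - 1))
    (hgm : ∀ l, gm l = (l - Real.sqrt (l ^ 2 + 1)) ^ 2 *
        (Real.sqrt (l ^ 2 + 1) * (1 / 2 - b / 4) + b * l / 4) -
        (Real.sqrt (l ^ 2 + 1) - l))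
    (hLm : ∀ l, Lm l = 2 * N l * (1 / N' l + 1 / 4) - l)
    (hG₂ : ∀ l, G₂ l = b / (l ^ 2 + 1) ^ ((3 : ℝ) / 2) - (N' l) ^ 2 / (2 * N l))
    (sm : ℝ) (hsm : sm = -(b + 2) / (2 * Real.sqrt (3 * (1 - b)))) :
    (gm sm = 0 ∧ ∀ l, gm l = 0 → l = sm) ∧
    (Lm sm = -Real.sqrt (3 * (1 - b)) ∧
      sSup (Set.range Lm) = -Real.sqrt (3 * (1 - b))) ∧
    (G₂ (-(1 / Real.sqrt 3)) = 0 ∧ ∀ l, G₂ l = 0 → l = -(1 / Real.sqrt 3)) := by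
  have h1b : (0:ℝ) < 1 - b := by linarith
  set t := Real.sqrt (3 * (1 - b)) with htdef
  have ht0 : 0 < t := Real.sqrt_pos.mpr (by linarith)
  have ht : t^2 = 3*(1-b) := Real.sq_sqrt (by linarith)
  have htne : t ≠ 0 := ne_of_gt ht0
  -- u at sm is 3/t
  obtain ⟨u₀, hs₀, hu₀, hsl₀, hul₀⟩ := svi_facts sm
  have hcand : (3/t)^2 + 2*sm*(3/t) = 1 := by
    rw [hsm]; field_simp; linear_combination (-1)*ht
  have hu₀3 : u₀ = 3/t := svi_uniq_root hu₀ (by positivity) hul₀ hcand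
  -- gm sm = 0
  have hgm_sm : gm sm = 0 := by
    rw [svi_gm_formula b sm u₀ gm hgm hs₀ hul₀, hu₀3]
    have h : (1-b)*(3/t)^2 - 3 = 0 := by field_simp; linear_combination (-3)*ht
    rw [h]; ring
  -- Lm sm = -t
  have hLm_sm : Lm sm = -t := by
    rw [svi_Lm_formula b sm u₀ hb₀ N N' Lm hN hN' hLm hs₀ hu₀ hsl₀ hul₀, hu₀3]
    field_simp
    linear_combination ht
  -- upper bound
  have hbound : ∀ l, Lm l ≤ -t := by
    intro l
    obtain ⟨u, hs, hu, hsl, hul⟩ := svi_facts l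
    rw [svi_Lm_formula b l u hb₀ N N' Lm hN hN' hLm hs hu hsl hul]
    have h5 : (1-b)*u^2 + 3 ≥ 2*t*u := by
      nlinarith [sq_nonneg ((1-b)*u - t), ht, h1b]
    have hX : 2*u*(3/(2*u)) = 3 := by field_simp
    nlinarith [h5, hu, hX]
  refine ⟨⟨hgm_sm, ?_⟩, ⟨hLm_sm, ?_⟩, ?_, ?_⟩
  · -- uniqueness for gm
    intro l hl
    obtain ⟨u, hs, hu, hsl, hul⟩ := svi_facts l
    rw [svi_gm_formula b l u gm hgm hs hul] at hl
    have hu2 : (1-b)*u^2 = 3 := by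
      rcases mul_eq_zero.mp (by linarith [hl] : u * ((1-b)*u^2 - 3) = 0) with h | h
      · linarith
      · linarith
    have htu : t*u = 3 := svi_pos_sq_eq (by positivity) (by norm_num)
      (by linear_combination u^2*ht + 3*hu2)
    have hu3 : u = 3/t := by field_simp; linear_combination htu
    rw [hu3] at hul
    field_simp at hul
    have h9 : t*(9 + 6*l*t) = t*t^2 := by linear_combination t*hul
    have h9' : 9 + 6*l*t = t^2 := mul_left_cancel₀ htne h9
    rw [hsm, eq_div_iff (by positivity)]
    linear_combination h9'/3 + ht/3
  · -- sSup
    have hmem : -t ∈ Set.range Lm := ⟨sm, hLm_sm⟩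
    apply le_antisymm
    · exact csSup_le ⟨-t, hmem⟩ (by rintro y ⟨l, rfl⟩; exact hbound l)
    · exact le_csSup ⟨-t, by rintro y ⟨l, rfl⟩; exact hbound l⟩ hmem
  · -- G₂ at -(1/√3)
    have hs30 : (0:ℝ) < Real.sqrt 3 := Real.sqrt_pos.mpr (by norm_num)
    have hs3 : (Real.sqrt 3)^2 = 3 := Real.sq_sqrt (by norm_num)
    obtain ⟨u, hs, hu, hsl, hul⟩ := svi_facts (-(1 / Real.sqrt 3))
    have hcand3 : (Real.sqrt 3)^2 + 2*(-(1/Real.sqrt 3))*(Real.sqrt 3) = 1 := by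
      field_simp
      linear_combination hs3
    have hu3 : u = Real.sqrt 3 := svi_uniq_root hu hs30 hul hcand3
    rw [svi_G2_formula b _ u hb₀ N N' G₂ hN hN' hG₂ hs hu hsl, hu3]
    have h2 : Real.sqrt 3 * (Real.sqrt 3 + -(1/Real.sqrt 3)) = 2 := by
      field_simp
      norm_num
    rw [h2]
    norm_num
  · -- uniqueness for G₂
    intro l hl
    have hs30 : (0:ℝ) < Real.sqrt 3 := Real.sqrt_pos.mpr (by norm_num)
    have hs3 : (Real.sqrt 3)^2 = 3 := Real.sq_sqrt (by norm_num)
    obtain ⟨u, hs, hu, hsl, hul⟩ := svi_facts l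
    rw [svi_G2_formula b l u hb₀ N N' G₂ hN hN' hG₂ hs hu hsl] at hl
    have hden : (2*(u+l)^3) ≠ 0 := by positivity
    rcases div_eq_zero_iff.mp hl with h | h
    · have h' : 2 - u*(u+l) = 0 := by
        rcases mul_eq_zero.mp h with h'' | h''
        · exact absurd h'' (ne_of_gt hb₀)
        · exact h''
      have huu : u^2 + l*u = 2 := by linear_combination -h'
      have hu2 : u^2 = 3 := by linear_combination 2*huu - hul
      have hlu : l*u = -1 := by linear_combination huu - hu2
      have hu3 : u = Real.sqrt 3 := svi_pos_sq_eq hu.le (Real.sqrt_nonneg 3)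
        (by rw [hs3]; exact hu2)
      rw [hu3] at hlu
      field_simp
      linear_combination hlu
    · exact absurd h hden
end

section
/- Let 0 < b < 2 and consider the normalized SVI with ρ = 0: for α ∈ ℝ let N_α(l) = α + b√(l²+1), L₋(l; α) = 2N_α(l)(1/N'(l) + 1/4) − l for l < 0, where N'(l) = bl/√(l²+1), and g₋(l) = (l²/4)(2√(l²+1) + bl) − √(l²+1). Set l⁰ := −6b/√(b⁴ − 20b² + 64) (note b⁴ − 20b² + 64 = (b²−4)(b²−16) > 0 for 0 < b < 2) and α⁰ := b·g₋(l⁰). Then L₋(l⁰; α⁰) = 0 and g₋(l⁰) > −1; in particular the Fukasawa threshold F(b,0) = α⁰ satisfies F(b,0) > −b. -/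
/-- Fukasawa threshold at `ρ = 0`: with
`l⁰ = −6b/√(b⁴ − 20b² + 64)` and `α⁰ = b·g₋(l⁰)`, one has `L₋(l⁰; α⁰) = 0` and
`g₋(l⁰) > −1`; in particular the Fukasawa threshold `F(b,0) = α⁰` satisfies
`F(b,0) > −b`. -/
theorem fukasawa_threshold_rho_zero
    (b : ℝ) (hb₀ : 0 < b) (hb₂ : b < 2)
    (N' gm : ℝ → ℝ) (Nα Lm : ℝ → ℝ → ℝ)
    (hN' : ∀ l, N' l = b * l / Real.sqrt (l ^ 2 + 1))
    (hNα : ∀ α l, Nα α l = α + b * Real.sqrt (l ^ 2 + 1))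
    (hLm : ∀ α l, l < 0 → Lm α l = 2 * Nα α l * (1 / N' l + 1 / 4) - l)
    (hgm : ∀ l, gm l = l ^ 2 / 4 * (2 * Real.sqrt (l ^ 2 + 1) + b * l) -
        Real.sqrt (l ^ 2 + 1))
    (l₀ α₀ : ℝ)
    (hl₀ : l₀ = -(6 * b) / Real.sqrt (b ^ 4 - 20 * b ^ 2 + 64))
    (hα₀ : α₀ = b * gm l₀) :
    0 < b ^ 4 - 20 * b ^ 2 + 64 ∧
    b ^ 4 - 20 * b ^ 2 + 64 = (b ^ 2 - 4) * (b ^ 2 - 16) ∧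
    Lm α₀ l₀ = 0 ∧ -1 < gm l₀ ∧ -b < α₀ := by
  have hb2 : b ^ 2 < 4 := by nlinarith
  have hD : 0 < b ^ 4 - 20 * b ^ 2 + 64 := by nlinarith [mul_pos (by nlinarith : (0:ℝ) < 4 - b ^ 2) (by nlinarith : (0:ℝ) < 16 - b ^ 2)]
  set D : ℝ := b ^ 4 - 20 * b ^ 2 + 64 with hDdef
  set t : ℝ := Real.sqrt D with htdef
  have ht0 : 0 < t := Real.sqrt_pos.mpr hD
  have ht : t ^ 2 = D := Real.sq_sqrt hD.le
  have htne : t ≠ 0 := ne_of_gt ht0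
  have hbne : b ≠ 0 := ne_of_gt hb₀
  have hDne : D ≠ 0 := ne_of_gt hD
  have hb8 : b ^ 2 + 8 ≠ 0 := by positivity
  -- the square root at l₀
  have hsq : l₀ ^ 2 + 1 = ((b ^ 2 + 8) / t) ^ 2 := by
    rw [hl₀, div_pow, div_pow, ht]
    field_simp
    rw [hDdef]
    ring
  have hs : Real.sqrt (l₀ ^ 2 + 1) = (b ^ 2 + 8) / t := by
    rw [hsq, Real.sqrt_sq (by positivity)]
  have hl₀neg : l₀ < 0 := by
    rw [hl₀]
    apply div_neg_of_neg_of_pos (by nlinarith) ht0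
  -- value of gm at l₀
  have hg : gm l₀ = -(b ^ 6 + 24 * b ^ 4 - 240 * b ^ 2 + 512) / (D * t) := by
    rw [hgm, hs, hl₀, div_pow, ht]
    field_simp
    rw [hDdef]
    ring
  -- value of N' at l₀
  have hN'v : N' l₀ = -(6 * b ^ 2) / (b ^ 2 + 8) := by
    rw [hN', hs, hl₀]
    field_simp
  -- value of Nα at l₀
  have hNv : Nα α₀ l₀ = 36 * b ^ 3 * (4 - b ^ 2) / (D * t) := by
    rw [hNα, hα₀, hg, hs]
    field_simp
    ring
  -- L₋ vanishes
  have hLzero : Lm α₀ l₀ = 0 := by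
    rw [hLm α₀ l₀ hl₀neg, hNv, hN'v, hl₀]
    field_simp
    ring
  -- the key positivity: D^3 > P^2
  have hkey : D ^ 3 - (b ^ 6 + 24 * b ^ 4 - 240 * b ^ 2 + 512) ^ 2
      = 108 * b ^ 4 * (2 - b) ^ 3 * (2 + b) ^ 3 := by
    rw [hDdef]; ring
  have hDt : 0 < D * t := mul_pos hD ht0
  have hDt3 : (D * t) ^ 2 = D ^ 3 := by
    rw [mul_pow, ht]; ring
  have hpos : 0 < 108 * b ^ 4 * (2 - b) ^ 3 * (2 + b) ^ 3 :=
    mul_pos (mul_pos (by positivity) (pow_pos (by linarith) 3)) (pow_pos (by linarith) 3)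
  have h2 : (b ^ 6 + 24 * b ^ 4 - 240 * b ^ 2 + 512) ^ 2 < (D * t) ^ 2 := by
    rw [hDt3]; linarith [hkey, hpos]
  have hPlt : b ^ 6 + 24 * b ^ 4 - 240 * b ^ 2 + 512 < D * t :=
    lt_of_pow_lt_pow_left₀ 2 hDt.le h2
  have hgmgt : -1 < gm l₀ := by
    rw [hg]
    rw [neg_div, neg_lt_neg_iff, div_lt_one hDt]
    exact hPlt
  refine ⟨hD, by rw [hDdef]; ring, hLzero, hgmgt, ?_⟩
  rw [hα₀]
  nlinarith [hgmgt]
end
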